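/- Let N ≥ 2 and let m_1, …, m_N satisfy 0 < m_i ≤ 1 for every i and m̄ := (1/N) Σ_{i=1}^N m_i > 1 − 2/N; set α := N/(N(m̄ − 1) + 2), σ_i := 1/N + (m̄ − m_i)/2. Let δ > 0 and θ_i ≥ 1 satisfy 1/σ_i < δθ_i < 2/(1 − m_i) for every i (the right inequality read as no constraint when m_i = 1), and let r > 0 satisfy r^{2/θ_i − δ(1−m_i)} ≥ N δ m_i (δ m_i + 1) θ_i² / (α (δ min_j{σ_j θ_j} − 1)) for every i. Then the function F̄(y) := (Σ_{i=1}^N |y_i|^{θ_i})^{−δ} satisfies the supersolution inequality Σ_{i=1}^N [∂²_{y_i y_i}(F̄^{m_i}) + α σ_i ∂_{y_i}(y_i F̄)] ≤ 0 at every point y with Σ_{i=1}^N |y_i|^{θ_i} ≥ r and y_i ≠ 0 for all i. -/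

import Mathlib

/-- First partial derivative of `f` in the `i`-th coordinate direction. -/
noncomputable def pd1 {N : ℕ} (i : Fin N) (f : (Fin N → ℝ) → ℝ) (x : Fin N → ℝ) : ℝ :=
  deriv (fun s => f (Function.update x i s)) (x i)

/-- Second partial derivative of `f` in the `i`-th coordinate direction. -/
noncomputable def pd2 {N : ℕ} (i : Fin N) (f : (Fin N → ℝ) → ℝ) (x : Fin N → ℝ) : ℝ :=
  deriv (deriv (fun s => f (Function.update x i s))) (x i)


open Real Filter

lemma ubs_sq2 {t : ℝ} (ht : t ≠ 0) (a : ℝ) : |t| ^ a * t * t = |t| ^ (a + 2) := by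
  have h0 : (0:ℝ) < |t| := abs_pos.2 ht
  rw [Real.rpow_add h0, show ((2:ℝ) = ((2:ℕ):ℝ)) by norm_num, Real.rpow_natCast, sq_abs]
  ring

lemma ubs_sq {t : ℝ} (ht : t ≠ 0) (a b : ℝ) :
    |t| ^ a * t * (|t| ^ b * t) = |t| ^ (a + b + 2) := by
  have h0 : (0:ℝ) < |t| := abs_pos.2 ht
  rw [show a + b + 2 = a + (b + 2) by ring, Real.rpow_add h0, ← ubs_sq2 ht b]
  ring

lemma ubs_abs_rpow (c : ℝ) {t : ℝ} (ht : t ≠ 0) :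
    HasDerivAt (fun s : ℝ => |s| ^ c) (c * |t| ^ (c - 2) * t) t := by
  rcases ht.lt_or_gt with h | h
  · have h1 : HasDerivAt (fun s : ℝ => (-s) ^ c) (c * (-t) ^ (c - 1) * (-1)) t := by
      have hneg : HasDerivAt (fun s : ℝ => -s) (-1) t := (hasDerivAt_id t).neg
      have := (Real.hasDerivAt_rpow_const (x := -t) (p := c)
        (Or.inl (by simpa using ht))).comp t hneg
      exact this.congr_deriv (by ring)
    have heq : (fun s : ℝ => |s| ^ c) =ᶠ[nhds t] (fun s : ℝ => (-s) ^ c) := by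
      filter_upwards [Iio_mem_nhds h] with s hs
      rw [abs_of_neg hs]
    have h2 := h1.congr_of_eventuallyEq heq
    refine h2.congr_deriv (Eq.symm ?_)
    have habs : |t| = -t := abs_of_neg h
    have h3 : (-t) ^ (c - 1) = (-t) ^ (c - 2) * (-t) := by
      rw [show c - 1 = (c - 2) + 1 by ring, Real.rpow_add_one (by simpa using ht)]
    rw [habs, h3]; ring
  · have h1 : HasDerivAt (fun s : ℝ => s ^ c) (c * t ^ (c - 1)) t :=
      Real.hasDerivAt_rpow_const (Or.inl ht)
    have heq : (fun s : ℝ => |s| ^ c) =ᶠ[nhds t] (fun s : ℝ => s ^ c) := by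
      filter_upwards [Ioi_mem_nhds h] with s hs
      rw [abs_of_pos hs]
    have h2 := h1.congr_of_eventuallyEq heq
    refine h2.congr_deriv (Eq.symm ?_)
    have habs : |t| = t := abs_of_pos h
    have h3 : t ^ (c - 1) = t ^ (c - 2) * t := by
      rw [show c - 1 = (c - 2) + 1 by ring, Real.rpow_add_one ht]
    rw [habs, h3]; ring

lemma ubs_L3 (c p A : ℝ) (hA : 0 < A) {t : ℝ} (ht : t ≠ 0) :
    HasDerivAt (fun s : ℝ => (|s| ^ c + A) ^ p)
      (c * |t| ^ (c - 2) * t * p * (|t| ^ c + A) ^ (p - 1)) t := by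
  have h1 : HasDerivAt (fun s : ℝ => |s| ^ c + A) (c * |t| ^ (c - 2) * t) t :=
    (ubs_abs_rpow c ht).add_const A
  have hpos : (0:ℝ) < |t| ^ c + A := by positivity
  exact h1.rpow_const (Or.inl hpos.ne')

lemma ubs_phi (c : ℝ) {t : ℝ} (ht : t ≠ 0) :
    HasDerivAt (fun s : ℝ => |s| ^ (c - 2) * s) ((c - 1) * |t| ^ (c - 2)) t := by
  have := (ubs_abs_rpow (c - 2) ht).mul (hasDerivAt_id t)
  refine this.congr_deriv (Eq.symm ?_)
  have h2 : |t| ^ (c - 2 - 2) * t * t = |t| ^ (c - 2) := by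
    rw [ubs_sq2 ht]; norm_num
  simp only [id_eq, mul_one]
  linear_combination (2 - c) * h2

lemma ubs_L4 (c p A : ℝ) (hA : 0 < A) {t : ℝ} (ht : t ≠ 0) :
    HasDerivAt (fun s : ℝ => c * |s| ^ (c - 2) * s * p * (|s| ^ c + A) ^ (p - 1))
      (p * c * (c - 1) * |t| ^ (c - 2) * (|t| ^ c + A) ^ (p - 1)
        + p * (p - 1) * c ^ 2 * |t| ^ (2 * c - 2) * (|t| ^ c + A) ^ (p - 2)) t := by
  have hφ := ubs_phi c ht
  have hψ := ubs_L3 c (p - 1) A hA ht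
  have h := (hφ.mul hψ).const_mul (c * p)
  have hfun : (fun s : ℝ => c * |s| ^ (c - 2) * s * p * (|s| ^ c + A) ^ (p - 1))
      = fun s : ℝ => c * p * (|s| ^ (c - 2) * s * (|s| ^ c + A) ^ (p - 1)) := by
    funext s; ring
  rw [hfun]
  refine h.congr_deriv (Eq.symm ?_)
  have hk : |t| ^ (c - 2) * t * (|t| ^ (c - 2) * t) = |t| ^ (2 * c - 2) := by
    rw [ubs_sq ht]; congr 1; ring
  have hp1 : p - 1 - 1 = p - 2 := by ring
  rw [hp1]
  linear_combination (-(c ^ 2 * p * (p - 1) * (|t| ^ c + A) ^ (p - 2))) * hk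

lemma ubs_L5 (c p A : ℝ) (hA : 0 < A) {t : ℝ} (ht : t ≠ 0) :
    HasDerivAt (fun s : ℝ => s * (|s| ^ c + A) ^ p)
      ((|t| ^ c + A) ^ p + p * c * |t| ^ c * (|t| ^ c + A) ^ (p - 1)) t := by
  have := (hasDerivAt_id t).mul (ubs_L3 c p A hA ht)
  refine this.congr_deriv (Eq.symm ?_)
  have h2 : |t| ^ (c - 2) * t * t = |t| ^ c := by
    rw [ubs_sq2 ht]; norm_num
  simp only [id_eq, one_mul]
  linear_combination (-(p * c * (|t| ^ c + A) ^ (p - 1))) * h2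

set_option maxHeartbeats 1000000 in
/-- the anisotropic upper barrier `F̄(y) = (Σ_i |y_i|^{θ_i})^{-δ}` is a
supersolution of the stationary profile equation on the outer domain
`{Σ_i |y_i|^{θ_i} ≥ r}` (away from the coordinate hyperplanes). -/
theorem upper_barrier_supersolution (N : ℕ) (hN : 2 ≤ N) (m : Fin N → ℝ)
    (hm : ∀ i, 0 < m i ∧ m i ≤ 1)
    (mbar α : ℝ) (σ : Fin N → ℝ)
    (hmbar : mbar = (1 / (N : ℝ)) * ∑ i, m i)
    (hH2 : 1 - 2 / (N : ℝ) < mbar)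
    (hα : α = (N : ℝ) / ((N : ℝ) * (mbar - 1) + 2))
    (hσ : ∀ i, σ i = 1 / (N : ℝ) + (mbar - m i) / 2)
    (δ : ℝ) (hδ : 0 < δ) (θ : Fin N → ℝ) (hθ : ∀ i, 1 ≤ θ i)
    (hlow : ∀ i, 1 / σ i < δ * θ i)
    (hhigh : ∀ i, m i < 1 → δ * θ i < 2 / (1 - m i))
    (r : ℝ) (hr : 0 < r)
    (hrbig : ∀ i, (N : ℝ) * δ * m i * (δ * m i + 1) * θ i ^ 2
        / (α * (δ * (⨅ j, σ j * θ j) - 1)) ≤ r ^ (2 / θ i - δ * (1 - m i)))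
    (Fbar : (Fin N → ℝ) → ℝ)
    (hFbar : ∀ y : Fin N → ℝ, Fbar y = (∑ i, |y i| ^ θ i) ^ (-δ)) :
    ∀ y : Fin N → ℝ, r ≤ ∑ i, |y i| ^ θ i → (∀ i, y i ≠ 0) →
      ∑ i, (pd2 i (fun z => Fbar z ^ m i) y
        + α * σ i * pd1 i (fun z => z i * Fbar z) y) ≤ 0 := by
  intro y hy hyn
  haveI : Nonempty (Fin N) := ⟨⟨0, by omega⟩⟩
  haveI : Nontrivial (Fin N) := Fin.nontrivial_iff_two_le.mpr hN
  have hNpos : (0:ℝ) < N := by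
    have : (2:ℝ) ≤ N := by exact_mod_cast hN
    linarith
  have hN0 : (N:ℝ) ≠ 0 := hNpos.ne'
  set S := ∑ i, |y i| ^ θ i with hSdef
  have hSpos : 0 < S := lt_of_lt_of_le hr hy
  have hσpos : ∀ j, 0 < σ j := by
    intro j
    have h2N : (2:ℝ)/N = 2*(1/N) := by ring
    have hNinv : 0 < 1/(N:ℝ) := by positivity
    rw [hσ]
    linarith [(hm j).2, hH2]
  have hαpos : 0 < α := by
    rw [hα]
    apply div_pos hNpos
    have hh : (N:ℝ) * (2/N) = 2 := by field_simp
    nlinarith [mul_pos hNpos (show (0:ℝ) < mbar - 1 + 2/N by linarith)]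
  set μ := ⨅ j, σ j * θ j with hμdef
  have hμle : ∀ j, μ ≤ σ j * θ j := fun j =>
    ciInf_le (Set.Finite.bddBelow (Set.finite_range _)) j
  have hμ1 : 1 < δ * μ := by
    obtain ⟨j, hj⟩ := exists_eq_ciInf_of_finite (f := fun j => σ j * θ j)
    have hj' : σ j * θ j = μ := hj.trans hμdef.symm
    rw [← hj']
    have h1 := hlow j
    have h2 := hσpos j
    have h3 := (div_lt_iff₀ h2).mp h1
    nlinarith [h3]
  have hK : 0 < α * (δ * μ - 1) := mul_pos hαpos (by linarith)
  have hσsum : ∑ i, σ i = 1 := by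
    have h1 : ∑ i, σ i = ∑ i, (1/(N:ℝ) + (mbar - m i)/2) :=
      Finset.sum_congr rfl (fun i _ => by rw [hσ])
    have hsm : ∑ i, m i = N * mbar := by rw [hmbar]; field_simp
    rw [h1, Finset.sum_add_distrib, Finset.sum_const, Finset.card_univ, Fintype.card_fin,
      nsmul_eq_mul, ← Finset.sum_div, Finset.sum_sub_distrib, Finset.sum_const,
      Finset.card_univ, Fintype.card_fin, nsmul_eq_mul, hsm]
    field_simp
    ring
  have hθpos : ∀ i, 0 < θ i := fun i => lt_of_lt_of_le one_pos (hθ i)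
  -- per-coordinate bound
  have hterm : ∀ i, pd2 i (fun z => Fbar z ^ m i) y
      + α * σ i * pd1 i (fun z => z i * Fbar z) y
      ≤ α * (δ * μ - 1) / N * S ^ (-δ) + α * σ i * S ^ (-δ)
        - α * δ * μ * (|y i| ^ θ i * S ^ (-δ - 1)) := by
    intro i
    have hθne : θ i ≠ 0 := (hθpos i).ne'
    set A := ∑ j ∈ Finset.univ.erase i, |y j| ^ θ j with hAdef
    have hApos : 0 < A := by
      obtain ⟨j, hj⟩ := exists_ne i
      apply Finset.sum_pos' (fun k _ => Real.rpow_nonneg (abs_nonneg _) _)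
      exact ⟨j, Finset.mem_erase.mpr ⟨hj, Finset.mem_univ j⟩,
        Real.rpow_pos_of_pos (abs_pos.mpr (hyn j)) _⟩
    have hsum : ∀ t : ℝ, ∑ j, |Function.update y i t j| ^ θ j = |t| ^ θ i + A := by
      intro t
      rw [← Finset.add_sum_erase Finset.univ (fun j => |Function.update y i t j| ^ θ j)
        (Finset.mem_univ i)]
      congr 1
      · rw [Function.update_self]
      · apply Finset.sum_congr rfl
        intro j hj
        rw [Function.update_of_ne (Finset.ne_of_mem_erase hj)]
    have hSi : |y i| ^ θ i + A = S := by
      rw [← hsum (y i), Function.update_eq_self]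
    have hbase : ∀ t : ℝ, (0:ℝ) ≤ |t| ^ θ i + A :=
      fun t => add_nonneg (Real.rpow_nonneg (abs_nonneg _) _) hApos.le
    have hfun2 : (fun t : ℝ => Fbar (Function.update y i t) ^ m i)
        = fun t : ℝ => (|t| ^ θ i + A) ^ (-δ * m i) := by
      funext t
      rw [hFbar, hsum t, ← Real.rpow_mul (hbase t)]
    have hfun1 : (fun t : ℝ => Function.update y i t i * Fbar (Function.update y i t))
        = fun t : ℝ => t * (|t| ^ θ i + A) ^ (-δ) := by
      funext t
      rw [Function.update_self, hFbar, hsum t]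
    have hpd2 : pd2 i (fun z => Fbar z ^ m i) y
        = -δ * m i * θ i * (θ i - 1) * |y i| ^ (θ i - 2) * S ^ (-δ * m i - 1)
          + -δ * m i * (-δ * m i - 1) * θ i ^ 2 * |y i| ^ (2 * θ i - 2)
            * S ^ (-δ * m i - 2) := by
      simp only [pd2]
      rw [hfun2]
      have hev : deriv (fun t : ℝ => (|t| ^ θ i + A) ^ (-δ * m i)) =ᶠ[nhds (y i)]
          fun t => θ i * |t| ^ (θ i - 2) * t * (-δ * m i)
            * (|t| ^ θ i + A) ^ (-δ * m i - 1) := by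
        filter_upwards [eventually_ne_nhds (hyn i)] with t ht
        exact (ubs_L3 (θ i) (-δ * m i) A hApos ht).deriv
      rw [hev.deriv_eq, (ubs_L4 (θ i) (-δ * m i) A hApos (hyn i)).deriv, hSi]
    have hpd1 : pd1 i (fun z => z i * Fbar z) y
        = S ^ (-δ) + -δ * θ i * |y i| ^ θ i * S ^ (-δ - 1) := by
      simp only [pd1]
      rw [hfun1, (ubs_L5 (θ i) (-δ) A hApos (hyn i)).deriv, hSi]
    -- three estimates
    have hT1 : -δ * m i * θ i * (θ i - 1) * |y i| ^ (θ i - 2) * S ^ (-δ * m i - 1) ≤ 0 := by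
      have h0 : 0 ≤ δ * m i * θ i * (θ i - 1) :=
        mul_nonneg (mul_nonneg (mul_nonneg hδ.le (hm i).1.le) (hθpos i).le)
          (by linarith [hθ i])
      have h1 : -δ * m i * θ i * (θ i - 1) ≤ 0 := by linarith
      have h2 : (0:ℝ) ≤ |y i| ^ (θ i - 2) := Real.rpow_nonneg (abs_nonneg _) _
      have h3 : (0:ℝ) ≤ S ^ (-δ * m i - 1) := Real.rpow_nonneg hSpos.le _
      exact mul_nonpos_of_nonpos_of_nonneg (mul_nonpos_of_nonpos_of_nonneg h1 h2) h3
    have he : 0 < 2 / θ i - δ * (1 - m i) := by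
      rcases lt_or_eq_of_le (hm i).2 with hlt | heq
      · have h6 := hhigh i hlt
        have h7 : 0 < 1 - m i := by linarith
        have h8 := (lt_div_iff₀ h7).mp h6
        rw [sub_pos, lt_div_iff₀ (hθpos i)]
        nlinarith [h8]
      · rw [heq]
        have h9 : (0:ℝ) < 2 / θ i := div_pos (by norm_num) (hθpos i)
        linarith
    have hT2 : -δ * m i * (-δ * m i - 1) * θ i ^ 2 * |y i| ^ (2 * θ i - 2)
        * S ^ (-δ * m i - 2) ≤ α * (δ * μ - 1) / N * S ^ (-δ) := by
      have hyleS : |y i| ^ θ i ≤ S := by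
        rw [hSdef]
        exact Finset.single_le_sum (fun j _ => Real.rpow_nonneg (abs_nonneg _) _)
          (Finset.mem_univ i)
      have hexp : (|y i| ^ θ i) ^ (2 - 2 / θ i) = |y i| ^ (2 * θ i - 2) := by
        rw [← Real.rpow_mul (abs_nonneg _)]
        congr 1
        field_simp
      have hc : (0:ℝ) ≤ 2 - 2 / θ i := by
        have : 2 / θ i ≤ 2 := by
          rw [div_le_iff₀ (hθpos i)]
          nlinarith [hθ i]
        linarith
      have h2 : |y i| ^ (2 * θ i - 2) ≤ S ^ (2 - 2 / θ i) := by
        rw [← hexp]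
        exact Real.rpow_le_rpow (Real.rpow_nonneg (abs_nonneg _) _) hyleS hc
      have hCpos : 0 < δ * m i * (δ * m i + 1) * θ i ^ 2 := by
        have h1 : 0 < δ * m i := mul_pos hδ (hm i).1
        have h2' : 0 < θ i ^ 2 := pow_pos (hθpos i) 2
        exact mul_pos (mul_pos h1 (by linarith)) h2'
      have hCeq : -δ * m i * (-δ * m i - 1) * θ i ^ 2
          = δ * m i * (δ * m i + 1) * θ i ^ 2 := by ring
      have hmul : S ^ (2 - 2 / θ i) * S ^ (-δ * m i - 2)
          = S ^ (-δ) / S ^ (2 / θ i - δ * (1 - m i)) := by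
        rw [← Real.rpow_add hSpos, ← Real.rpow_sub hSpos]
        congr 1
        ring
      have hSe : 0 < S ^ (2 / θ i - δ * (1 - m i)) := Real.rpow_pos_of_pos hSpos _
      have hrS : r ^ (2 / θ i - δ * (1 - m i)) ≤ S ^ (2 / θ i - δ * (1 - m i)) :=
        Real.rpow_le_rpow hr.le hy he.le
      have h5 : (N:ℝ) * δ * m i * (δ * m i + 1) * θ i ^ 2
          ≤ S ^ (2 / θ i - δ * (1 - m i)) * (α * (δ * μ - 1)) :=
        (div_le_iff₀ hK).mp ((hrbig i).trans hrS)
      have key : -δ * m i * (-δ * m i - 1) * θ i ^ 2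
          ≤ α * (δ * μ - 1) / N * S ^ (2 / θ i - δ * (1 - m i)) := by
        rw [hCeq, div_mul_eq_mul_div, le_div_iff₀ hNpos]
        nlinarith [h5]
      calc -δ * m i * (-δ * m i - 1) * θ i ^ 2 * |y i| ^ (2 * θ i - 2) * S ^ (-δ * m i - 2)
          ≤ -δ * m i * (-δ * m i - 1) * θ i ^ 2 * S ^ (2 - 2 / θ i) * S ^ (-δ * m i - 2) := by
            apply mul_le_mul_of_nonneg_right _ (Real.rpow_nonneg hSpos.le _)
            apply mul_le_mul_of_nonneg_left h2
            rw [hCeq]; exact hCpos.le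
        _ = -δ * m i * (-δ * m i - 1) * θ i ^ 2
              * (S ^ (-δ) / S ^ (2 / θ i - δ * (1 - m i))) := by
            rw [mul_assoc, hmul]
        _ ≤ (α * (δ * μ - 1) / N * S ^ (2 / θ i - δ * (1 - m i)))
              * (S ^ (-δ) / S ^ (2 / θ i - δ * (1 - m i))) := by
            apply mul_le_mul_of_nonneg_right key
            exact div_nonneg (Real.rpow_nonneg hSpos.le _) hSe.le
        _ = α * (δ * μ - 1) / N * S ^ (-δ) := by
            rw [show (α * (δ * μ - 1) / N * S ^ (2 / θ i - δ * (1 - m i)))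
                  * (S ^ (-δ) / S ^ (2 / θ i - δ * (1 - m i)))
                = α * (δ * μ - 1) / N * S ^ (-δ)
                  * (S ^ (2 / θ i - δ * (1 - m i)) / S ^ (2 / θ i - δ * (1 - m i)))
              from by ring, div_self hSe.ne', mul_one]
    have hX : (0:ℝ) ≤ |y i| ^ θ i * S ^ (-δ - 1) :=
      mul_nonneg (Real.rpow_nonneg (abs_nonneg _) _) (Real.rpow_nonneg hSpos.le _)
    have hdrift : α * δ * μ * (|y i| ^ θ i * S ^ (-δ - 1))
        ≤ α * δ * (σ i * θ i) * (|y i| ^ θ i * S ^ (-δ - 1)) := by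
      apply mul_le_mul_of_nonneg_right _ hX
      exact mul_le_mul_of_nonneg_left (hμle i) (mul_nonneg hαpos.le hδ.le)
    rw [hpd2, hpd1]
    linarith [hT1, hT2, hdrift]
  refine le_trans (Finset.sum_le_sum fun i _ => hterm i) (le_of_eq ?_)
  have e1 : ∑ i, α * σ i * S ^ (-δ) = α * S ^ (-δ) := by
    calc ∑ i, α * σ i * S ^ (-δ) = ∑ i, (α * S ^ (-δ)) * σ i :=
          Finset.sum_congr rfl fun i _ => by ring
      _ = (α * S ^ (-δ)) * ∑ i, σ i := by rw [← Finset.mul_sum]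
      _ = α * S ^ (-δ) := by rw [hσsum, mul_one]
  have e2 : ∑ i, α * δ * μ * (|y i| ^ θ i * S ^ (-δ - 1)) = α * δ * μ * S ^ (-δ) := by
    have hstep : S ^ (-δ - 1) * S = S ^ (-δ) := by
      rw [← Real.rpow_add_one hSpos.ne']
      norm_num
    calc ∑ i, α * δ * μ * (|y i| ^ θ i * S ^ (-δ - 1))
        = (α * δ * μ * S ^ (-δ - 1)) * ∑ i, |y i| ^ θ i := by
          rw [Finset.mul_sum]
          exact Finset.sum_congr rfl fun i _ => by ring
      _ = α * δ * μ * S ^ (-δ) := by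
          rw [← hSdef, mul_assoc (α * δ * μ), hstep]
  rw [Finset.sum_sub_distrib, Finset.sum_add_distrib, Finset.sum_const, Finset.card_univ,
    Fintype.card_fin, nsmul_eq_mul, e1, e2]
  field_simp
  ring
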